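/- For based simplicial complexes (X, x₀) and (Y, y₀), the homomorphism ((p₁)_#, (p₂)_#) : F(X × Y, (x₀,y₀)) → F(X, x₀) × F(Y, y₀) induced by the two projections of the categorical product is a group isomorphism. -/

import Mathlib

structure ASC (V : Type) where
  faces : Set (Finset V)
  down_closed : ∀ ⦃s t : Finset V⦄, s ∈ faces → t ⊆ s → t ∈ faces

variable {U V W : Type}

/-- A vertex map is a simplicial map if it sends every simplex to a simplex. -/
def IsSimplicialMap [DecidableEq W] (K : ASC V) (L : ASC W) (f : V → W) : Prop :=
  ∀ s ∈ K.faces, s.image f ∈ L.faces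

/-- Two maps are contiguous if `f(σ) ∪ g(σ)` is a simplex for every simplex `σ`. -/
def Contiguous [DecidableEq W] (K : ASC V) (L : ASC W) (f g : V → W) : Prop :=
  ∀ s ∈ K.faces, s.image f ∪ s.image g ∈ L.faces

/-- Contiguity equivalence: a finite chain of contiguities through simplicial maps. -/
def ContigEquiv [DecidableEq W] (K : ASC V) (L : ASC W) : (V → W) → (V → W) → Prop :=
  Relation.ReflTransGen (fun a b =>
    IsSimplicialMap K L a ∧ IsSimplicialMap K L b ∧ Contiguous K L a b)

/-- The categorical product of simplicial complexes. -/
def ASC.prod [DecidableEq V] [DecidableEq W] (K : ASC V) (L : ASC W) : ASC (V × W) where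
  faces := {s | s.image Prod.fst ∈ K.faces ∧ s.image Prod.snd ∈ L.faces}
  down_closed := fun _s _t hs hts =>
    ⟨K.down_closed hs.1 (Finset.image_subset_image hts),
     L.down_closed hs.2 (Finset.image_subset_image hts)⟩

/-- The simplicial interval `I_m` on vertices `0, …, m`. -/
def interval (m : ℕ) : ASC ℕ where
  faces := {s | (∀ x ∈ s, x ≤ m) ∧ ∀ x ∈ s, ∀ y ∈ s, x ≤ y + 1}
  down_closed := fun _s _t hs hts =>
    ⟨fun x hx => hs.1 x (hts hx), fun x hx y hy => hs.2 x (hts hx) y (hts hy)⟩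

/-- The vertex map of `α_i : I_{m+1} → I_m`. -/
def alpha (i : ℕ) : ℕ → ℕ := fun s => if s ≤ i then s else s - 1

/-- The categorical product `I_m × I_n`. -/
def prodInterval (m n : ℕ) : ASC (ℕ × ℕ) := (interval m).prod (interval n)

/-- A face sphere: a simplicial map `(I_m × I_n, ∂(I_m × I_n)) → (X, x₀)`. -/
def IsFaceSphere [DecidableEq V] (X : ASC V) (x₀ : V) (m n : ℕ) (f : ℕ × ℕ → V) : Prop :=
  IsSimplicialMap (prodInterval m n) X f ∧
  ∀ p : ℕ × ℕ, p.1 ≤ m → p.2 ≤ n →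
    (p.1 = 0 ∨ p.1 = m ∨ p.2 = 0 ∨ p.2 = n) → f p = x₀

/-- Contiguity equivalence of face spheres, relative the boundary. -/
def FaceContigEquiv [DecidableEq V] (X : ASC V) (x₀ : V) (m n : ℕ) :
    (ℕ × ℕ → V) → (ℕ × ℕ → V) → Prop :=
  Relation.ReflTransGen (fun a b =>
    IsFaceSphere X x₀ m n a ∧ IsFaceSphere X x₀ m n b ∧
      Contiguous (prodInterval m n) X a b)

/-- The trivial extension `f ∘ (α_m^r × α_n^s)`. -/
def trivExt (m n r s : ℕ) (f : ℕ × ℕ → V) : ℕ × ℕ → V :=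
  f ∘ Prod.map ((alpha m)^[r]) ((alpha n)^[s])

/-- Extension-contiguity equivalence of face spheres of possibly different sizes. -/
def ExtContigEquiv [DecidableEq V] (X : ASC V) (x₀ : V) (m n : ℕ) (f : ℕ × ℕ → V)
    (m' n' : ℕ) (g : ℕ × ℕ → V) : Prop :=
  ∃ M N, m ≤ M ∧ m' ≤ M ∧ n ≤ N ∧ n' ≤ N ∧
    FaceContigEquiv X x₀ M N (trivExt m n (M - m) (N - n) f)
      (trivExt m' n' (M - m') (N - n') g)

/-- The product `f · g` of face spheres: `f` in the lower-left block,
a translate of `g` in the upper-right block, basepoint elsewhere. -/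
def fsMul (x₀ : V) (m n : ℕ) (f g : ℕ × ℕ → V) : ℕ × ℕ → V := fun p =>
  if p.1 ≤ m ∧ p.2 ≤ n then f p
  else if m + 1 ≤ p.1 ∧ n + 1 ≤ p.2 then g (p.1 - (m + 1), p.2 - (n + 1))
  else x₀

section Aux
variable {V W : Type}

lemma alpha_iter (m r x : ℕ) : (alpha m)^[r] x = max (min x m) (x - r) := by
  induction r with
  | zero => simp only [Function.iterate_zero, id_eq]; omega
  | succ r ih =>
    rw [Function.iterate_succ_apply', ih, alpha]
    split_ifs <;> omega

lemma alpha_simp (m M : ℕ) (h : m ≤ M) :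
    IsSimplicialMap (interval M) (interval m) ((alpha m)^[M - m]) := by
  intro s hs
  obtain ⟨h1, h2⟩ := hs
  constructor
  · intro x hx
    simp only [Finset.mem_image] at hx
    obtain ⟨y, hy, rfl⟩ := hx
    have := h1 y hy
    rw [alpha_iter]; omega
  · intro x hx y hy
    simp only [Finset.mem_image] at hx hy
    obtain ⟨a, ha, rfl⟩ := hx
    obtain ⟨b, hb, rfl⟩ := hy
    have := h2 a ha b hb
    have := h1 a ha
    have := h1 b hb
    rw [alpha_iter, alpha_iter]; omega

lemma pi_simp (m n M N : ℕ) (hm : m ≤ M) (hn : n ≤ N) :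
    IsSimplicialMap (prodInterval M N) (prodInterval m n)
      (Prod.map ((alpha m)^[M - m]) ((alpha n)^[N - n])) := by
  intro s hs
  obtain ⟨hs1, hs2⟩ := hs
  constructor
  · rw [Finset.image_image]
    have e : Prod.fst ∘ Prod.map ((alpha m)^[M - m]) ((alpha n)^[N - n]) =
        (alpha m)^[M - m] ∘ Prod.fst := rfl
    rw [e, ← Finset.image_image]
    exact alpha_simp m M hm _ hs1
  · rw [Finset.image_image]
    have e : Prod.snd ∘ Prod.map ((alpha m)^[M - m]) ((alpha n)^[N - n]) =
        (alpha n)^[N - n] ∘ Prod.snd := rfl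
    rw [e, ← Finset.image_image]
    exact alpha_simp n N hn _ hs2

lemma trivExt_image [DecidableEq V] (m n r s : ℕ) (f : ℕ × ℕ → V) (t : Finset (ℕ × ℕ)) :
    t.image (trivExt m n r s f) = (t.image (Prod.map ((alpha m)^[r]) ((alpha n)^[s]))).image f := by
  rw [Finset.image_image]; rfl

lemma trivExt_sphere [DecidableEq V] {X : ASC V} {x₀ : V} {m n : ℕ} {f : ℕ × ℕ → V}
    (hf : IsFaceSphere X x₀ m n f) (M N : ℕ) (hm : m ≤ M) (hn : n ≤ N) :
    IsFaceSphere X x₀ M N (trivExt m n (M - m) (N - n) f) := by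
  constructor
  · intro s hs
    rw [trivExt_image]
    exact hf.1 _ (pi_simp m n M N hm hn s hs)
  · intro p h1 h2 h3
    show f ((alpha m)^[M - m] p.1, (alpha n)^[N - n] p.2) = x₀
    have a1 := alpha_iter m (M - m) p.1
    have a2 := alpha_iter n (N - n) p.2
    apply hf.2 ((alpha m)^[M - m] p.1, (alpha n)^[N - n] p.2)
    · simp only [a1]; omega
    · simp only [a2]; omega
    · simp only [a1, a2]
      rcases h3 with h | h | h | h
      · left; omega
      · right; left; omega
      · right; right; left; omega
      · right; right; right; omega

lemma trivExt_chain [DecidableEq V] {X : ASC V} {x₀ : V} {m n : ℕ} {a b : ℕ × ℕ → V}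
    (M N : ℕ) (hm : m ≤ M) (hn : n ≤ N)
    (h : FaceContigEquiv X x₀ m n a b) :
    FaceContigEquiv X x₀ M N (trivExt m n (M - m) (N - n) a)
      (trivExt m n (M - m) (N - n) b) := by
  refine Relation.ReflTransGen.lift (fun f => trivExt m n (M - m) (N - n) f) ?_ _ _ h
  rintro f g ⟨hf, hg, hc⟩
  refine ⟨trivExt_sphere hf M N hm hn, trivExt_sphere hg M N hm hn, ?_⟩
  intro s hs
  rw [trivExt_image, trivExt_image]
  exact hc _ (pi_simp m n M N hm hn s hs)

lemma trivExt_comp [DecidableEq V] (f : ℕ × ℕ → V) (m n M₁ N₁ M N : ℕ)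
    (h1 : m ≤ M₁) (h2 : M₁ ≤ M) (h3 : n ≤ N₁) (h4 : N₁ ≤ N) :
    trivExt M₁ N₁ (M - M₁) (N - N₁) (trivExt m n (M₁ - m) (N₁ - n) f)
      = trivExt m n (M - m) (N - n) f := by
  funext p
  show f ((alpha m)^[M₁ - m] ((alpha M₁)^[M - M₁] p.1),
      (alpha n)^[N₁ - n] ((alpha N₁)^[N - N₁] p.2)) = f ((alpha m)^[M - m] p.1, (alpha n)^[N - n] p.2)
  rw [show (alpha m)^[M₁ - m] ((alpha M₁)^[M - M₁] p.1) = (alpha m)^[M - m] p.1 by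
      rw [alpha_iter, alpha_iter, alpha_iter]; omega,
    show (alpha n)^[N₁ - n] ((alpha N₁)^[N - N₁] p.2) = (alpha n)^[N - n] p.2 by
      rw [alpha_iter, alpha_iter, alpha_iter]; omega]

lemma proj_sphere [DecidableEq V] [DecidableEq W] {X : ASC V} {Y : ASC W} {x₀ : V} {y₀ : W}
    {m n : ℕ} {h : ℕ × ℕ → V × W} (hh : IsFaceSphere (X.prod Y) (x₀, y₀) m n h) :
    IsFaceSphere X x₀ m n (Prod.fst ∘ h) ∧ IsFaceSphere Y y₀ m n (Prod.snd ∘ h) := by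
  refine ⟨⟨fun s hs => ?_, fun p h1 h2 h3 => ?_⟩, ⟨fun s hs => ?_, fun p h1 h2 h3 => ?_⟩⟩
  · rw [← Finset.image_image]
    exact (hh.1 s hs).1
  · show (h p).1 = x₀
    rw [hh.2 p h1 h2 h3]
  · rw [← Finset.image_image]
    exact (hh.1 s hs).2
  · show (h p).2 = y₀
    rw [hh.2 p h1 h2 h3]

lemma proj_chain [DecidableEq V] [DecidableEq W] {X : ASC V} {Y : ASC W} {x₀ : V} {y₀ : W}
    {m n : ℕ} {a b : ℕ × ℕ → V × W}
    (h : FaceContigEquiv (X.prod Y) (x₀, y₀) m n a b) :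
    FaceContigEquiv X x₀ m n (Prod.fst ∘ a) (Prod.fst ∘ b) ∧
    FaceContigEquiv Y y₀ m n (Prod.snd ∘ a) (Prod.snd ∘ b) := by
  constructor
  · refine Relation.ReflTransGen.lift (fun f => Prod.fst ∘ f) ?_ _ _ h
    rintro f g ⟨hf, hg, hc⟩
    refine ⟨(proj_sphere hf).1, (proj_sphere hg).1, fun s hs => ?_⟩
    have := (hc s hs).1
    rwa [Finset.image_union, Finset.image_image, Finset.image_image] at this
  · refine Relation.ReflTransGen.lift (fun f => Prod.snd ∘ f) ?_ _ _ h
    rintro f g ⟨hf, hg, hc⟩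
    refine ⟨(proj_sphere hf).2, (proj_sphere hg).2, fun s hs => ?_⟩
    have := (hc s hs).2
    rwa [Finset.image_union, Finset.image_image, Finset.image_image] at this

lemma pair_sphere [DecidableEq V] [DecidableEq W] {X : ASC V} {Y : ASC W} {x₀ : V} {y₀ : W}
    {m n : ℕ} {a : ℕ × ℕ → V} {c : ℕ × ℕ → W}
    (ha : IsFaceSphere X x₀ m n a) (hc : IsFaceSphere Y y₀ m n c) :
    IsFaceSphere (X.prod Y) (x₀, y₀) m n (fun p => (a p, c p)) := by
  constructor
  · intro s hs
    constructor
    · rw [Finset.image_image]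
      exact ha.1 s hs
    · rw [Finset.image_image]
      exact hc.1 s hs
  · intro p h1 h2 h3
    show (a p, c p) = (x₀, y₀)
    rw [ha.2 p h1 h2 h3, hc.2 p h1 h2 h3]

lemma pair_chain_left [DecidableEq V] [DecidableEq W] {X : ASC V} {Y : ASC W} {x₀ : V} {y₀ : W}
    {m n : ℕ} {a b : ℕ × ℕ → V} {c : ℕ × ℕ → W}
    (hc : IsFaceSphere Y y₀ m n c) (h : FaceContigEquiv X x₀ m n a b) :
    FaceContigEquiv (X.prod Y) (x₀, y₀) m n (fun p => (a p, c p)) (fun p => (b p, c p)) := by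
  refine Relation.ReflTransGen.lift (fun f => fun p => (f p, c p)) ?_ _ _ h
  rintro f g ⟨hf, hg, hcg⟩
  refine ⟨pair_sphere hf hc, pair_sphere hg hc, fun s hs => ?_⟩
  constructor
  · rw [Finset.image_union, Finset.image_image, Finset.image_image]
    exact hcg s hs
  · rw [Finset.image_union, Finset.image_image, Finset.image_image]
    show (s.image c) ∪ (s.image c) ∈ Y.faces
    rw [Finset.union_self]
    exact hc.1 s hs

lemma pair_chain_right [DecidableEq V] [DecidableEq W] {X : ASC V} {Y : ASC W} {x₀ : V} {y₀ : W}
    {m n : ℕ} {a b : ℕ × ℕ → W} {c : ℕ × ℕ → V}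
    (hc : IsFaceSphere X x₀ m n c) (h : FaceContigEquiv Y y₀ m n a b) :
    FaceContigEquiv (X.prod Y) (x₀, y₀) m n (fun p => (c p, a p)) (fun p => (c p, b p)) := by
  refine Relation.ReflTransGen.lift (fun f => fun p => (c p, f p)) ?_ _ _ h
  rintro f g ⟨hf, hg, hcg⟩
  refine ⟨pair_sphere hc hf, pair_sphere hc hg, fun s hs => ?_⟩
  constructor
  · rw [Finset.image_union, Finset.image_image, Finset.image_image]
    show (s.image c) ∪ (s.image c) ∈ X.faces
    rw [Finset.union_self]
    exact hc.1 s hs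
  · rw [Finset.image_union, Finset.image_image, Finset.image_image]
    exact hcg s hs

end Aux

/-- the projections induce an isomorphism
`F(X × Y, (x₀,y₀)) ≅ F(X, x₀) × F(Y, y₀)`: the induced map is a homomorphism
(projections of face spheres are face spheres and of products are products),
and it is surjective and injective on equivalence classes. -/
theorem faceGroup_prod_iso {V W : Type} [DecidableEq V] [DecidableEq W]
    (X : ASC V) (Y : ASC W) (x₀ : V) (y₀ : W) :
    -- projections send face spheres to face spheres
    (∀ (m n : ℕ) (h : ℕ × ℕ → V × W), IsFaceSphere (X.prod Y) (x₀, y₀) m n h →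
      IsFaceSphere X x₀ m n (Prod.fst ∘ h) ∧ IsFaceSphere Y y₀ m n (Prod.snd ∘ h)) ∧
    -- the induced map is well defined on classes
    (∀ (m n m' n' : ℕ) (h h' : ℕ × ℕ → V × W),
      ExtContigEquiv (X.prod Y) (x₀, y₀) m n h m' n' h' →
      ExtContigEquiv X x₀ m n (Prod.fst ∘ h) m' n' (Prod.fst ∘ h') ∧
      ExtContigEquiv Y y₀ m n (Prod.snd ∘ h) m' n' (Prod.snd ∘ h')) ∧
    -- the induced map is multiplicative
    (∀ (m n : ℕ) (h k : ℕ × ℕ → V × W),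
      Prod.fst ∘ fsMul (x₀, y₀) m n h k = fsMul x₀ m n (Prod.fst ∘ h) (Prod.fst ∘ k) ∧
      Prod.snd ∘ fsMul (x₀, y₀) m n h k = fsMul y₀ m n (Prod.snd ∘ h) (Prod.snd ∘ k)) ∧
    -- surjectivity
    (∀ (m n : ℕ) (f : ℕ × ℕ → V), IsFaceSphere X x₀ m n f →
      ∀ (r s : ℕ) (g : ℕ × ℕ → W), IsFaceSphere Y y₀ r s g →
      ∃ (M N : ℕ) (h : ℕ × ℕ → V × W), IsFaceSphere (X.prod Y) (x₀, y₀) M N h ∧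
        ExtContigEquiv X x₀ M N (Prod.fst ∘ h) m n f ∧
        ExtContigEquiv Y y₀ M N (Prod.snd ∘ h) r s g) ∧
    -- injectivity
    (∀ (m n m' n' : ℕ) (h h' : ℕ × ℕ → V × W),
      IsFaceSphere (X.prod Y) (x₀, y₀) m n h →
      IsFaceSphere (X.prod Y) (x₀, y₀) m' n' h' →
      ExtContigEquiv X x₀ m n (Prod.fst ∘ h) m' n' (Prod.fst ∘ h') →
      ExtContigEquiv Y y₀ m n (Prod.snd ∘ h) m' n' (Prod.snd ∘ h') →
      ExtContigEquiv (X.prod Y) (x₀, y₀) m n h m' n' h') := by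
  refine ⟨fun m n h hh => proj_sphere hh, ?_, ?_, ?_, ?_⟩
  · -- well-definedness
    rintro m n m' n' h h' ⟨M, N, h1, h2, h3, h4, hc⟩
    obtain ⟨c1, c2⟩ := proj_chain hc
    exact ⟨⟨M, N, h1, h2, h3, h4, c1⟩, ⟨M, N, h1, h2, h3, h4, c2⟩⟩
  · -- multiplicativity
    intro m n h k
    constructor <;> funext p <;>
      simp only [Function.comp_apply, fsMul] <;> split_ifs <;> rfl
  · -- surjectivity
    intro m n f hf r s g hg
    set M := max m r with hM
    set N := max n s with hN
    refine ⟨M, N, fun p => (trivExt m n (M - m) (N - n) f p, trivExt r s (M - r) (N - s) g p),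
      pair_sphere (trivExt_sphere hf M N (le_max_left _ _) (le_max_left _ _))
        (trivExt_sphere hg M N (le_max_right _ _) (le_max_right _ _)), ?_, ?_⟩
    · refine ⟨M, N, le_refl M, le_max_left _ _, le_refl N, le_max_left _ _, ?_⟩
      rw [Nat.sub_self, Nat.sub_self]
      exact Relation.ReflTransGen.refl
    · refine ⟨M, N, le_refl M, le_max_right _ _, le_refl N, le_max_right _ _, ?_⟩
      rw [Nat.sub_self, Nat.sub_self]
      exact Relation.ReflTransGen.refl
  · -- injectivity
    rintro m n m' n' h h' hh hh' ⟨M₁, N₁, a1, a2, a3, a4, c1⟩ ⟨M₂, N₂, b1, b2, b3, b4, c2⟩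
    set M := max M₁ M₂ with hM
    set N := max N₁ N₂ with hN
    have c1' := trivExt_chain M N (le_max_left _ _) (le_max_left _ _) c1
    have c2' := trivExt_chain M N (le_max_right _ _) (le_max_right _ _) c2
    rw [trivExt_comp _ m n M₁ N₁ M N a1 (le_max_left _ _) a3 (le_max_left _ _),
      trivExt_comp _ m' n' M₁ N₁ M N a2 (le_max_left _ _) a4 (le_max_left _ _)] at c1'
    rw [trivExt_comp _ m n M₂ N₂ M N b1 (le_max_right _ _) b3 (le_max_right _ _),
      trivExt_comp _ m' n' M₂ N₂ M N b2 (le_max_right _ _) b4 (le_max_right _ _)] at c2'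
    have hmM : m ≤ M := le_trans a1 (le_max_left _ _)
    have hnN : n ≤ N := le_trans a3 (le_max_left _ _)
    have hmM' : m' ≤ M := le_trans a2 (le_max_left _ _)
    have hnN' : n' ≤ N := le_trans a4 (le_max_left _ _)
    have hA : IsFaceSphere (X.prod Y) (x₀, y₀) M N (trivExt m n (M - m) (N - n) h) :=
      trivExt_sphere hh M N hmM hnN
    have hA' : IsFaceSphere (X.prod Y) (x₀, y₀) M N (trivExt m' n' (M - m') (N - n') h') :=
      trivExt_sphere hh' M N hmM' hnN'
    have hG : IsFaceSphere Y y₀ M N (Prod.snd ∘ trivExt m n (M - m) (N - n) h) :=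
      (proj_sphere hA).2
    have hF' : IsFaceSphere X x₀ M N (Prod.fst ∘ trivExt m' n' (M - m') (N - n') h') :=
      (proj_sphere hA').1
    have step1 : FaceContigEquiv (X.prod Y) (x₀, y₀) M N
        (fun p => ((Prod.fst ∘ trivExt m n (M - m) (N - n) h) p,
          (Prod.snd ∘ trivExt m n (M - m) (N - n) h) p))
        (fun p => ((Prod.fst ∘ trivExt m' n' (M - m') (N - n') h') p,
          (Prod.snd ∘ trivExt m n (M - m) (N - n) h) p)) :=
      pair_chain_left hG c1'
    have step2 : FaceContigEquiv (X.prod Y) (x₀, y₀) M N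
        (fun p => ((Prod.fst ∘ trivExt m' n' (M - m') (N - n') h') p,
          (Prod.snd ∘ trivExt m n (M - m) (N - n) h) p))
        (fun p => ((Prod.fst ∘ trivExt m' n' (M - m') (N - n') h') p,
          (Prod.snd ∘ trivExt m' n' (M - m') (N - n') h') p)) :=
      pair_chain_right hF' c2'
    exact ⟨M, N, hmM, hmM', hnN, hnN', step1.trans step2⟩
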